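/- Let r > 0 and let D = {x ∈ ℝ³ : x₁² + x₂² < r²}. Let a₁₂, a₁₃, a₂₃ : D → ℝ be C¹ functions satisfying the closedness relation ∂₁a₂₃ − ∂₂a₁₃ + ∂₃a₁₂ = 0 on D (i.e. the 2-form α = a₁₂ dx₁∧dx₂ + a₁₃ dx₁∧dx₃ + a₂₃ dx₂∧dx₃ is closed). Define β₁, β₂, β₃ : D → ℝ by β₁(x) = −x₂·∫₀¹ t·a₁₂(t x₁, t x₂, x₃) dt, β₂(x) = x₁·∫₀¹ t·a₁₂(t x₁, t x₂, x₃) dt, and β₃(x) = ∫₀¹ ( x₁·a₁₃(t x₁, t x₂, x₃) + x₂·a₂₃(t x₁, t x₂, x₃) ) dt. Then on D one has ∂₁β₂ − ∂₂β₁ = a₁₂, ∂₁β₃ − ∂₃β₁ = a₁₃, and ∂₂β₃ − ∂₃β₂ = a₂₃ (i.e. dβ = α for the 1-form β = β₁dx₁ + β₂dx₂ + β₃dx₃). Moreover, if |a₁₂|, |a₁₃|, |a₂₃| ≤ M on D for some M ≥ 0, then |β_i(x)| ≤ 2rM for all x ∈ D and i = 1, 2, 3. -/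

import Mathlib

set_option synthInstance.maxHeartbeats 400000
set_option maxHeartbeats 1000000

open MeasureTheory Set Metric intervalIntegral
open scoped Interval

noncomputable def hocP : (ℝ × ℝ × ℝ) →L[ℝ] (ℝ × ℝ × ℝ) :=
  (ContinuousLinearMap.fst ℝ ℝ (ℝ × ℝ)).prod
    ((((ContinuousLinearMap.fst ℝ ℝ ℝ)).comp (ContinuousLinearMap.snd ℝ ℝ (ℝ × ℝ))).prod 0)

noncomputable def hocQ : (ℝ × ℝ × ℝ) →L[ℝ] (ℝ × ℝ × ℝ) :=
  (0 : (ℝ × ℝ × ℝ) →L[ℝ] ℝ).prod (((0 : (ℝ × ℝ × ℝ) →L[ℝ] ℝ)).prod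
    ((ContinuousLinearMap.snd ℝ ℝ ℝ).comp (ContinuousLinearMap.snd ℝ ℝ (ℝ × ℝ))))

noncomputable def hocA (t : ℝ) : (ℝ × ℝ × ℝ) →L[ℝ] (ℝ × ℝ × ℝ) := t • hocP + hocQ

lemma hocA_apply (t : ℝ) (v : ℝ × ℝ × ℝ) : hocA t v = (t * v.1, t * v.2.1, v.2.2) := by
  simp [hocA, hocP, hocQ, Prod.ext_iff]

lemma hocA_cont : Continuous (fun t : ℝ => hocA t) := by
  exact (continuous_id.smul continuous_const).add continuous_const

lemma hocA_cont2 : Continuous (fun p : ℝ × (ℝ × ℝ × ℝ) => hocA p.1 p.2) := by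
  have : (fun p : ℝ × (ℝ × ℝ × ℝ) => hocA p.1 p.2)
      = fun p : ℝ × (ℝ × ℝ × ℝ) => (p.1 * p.2.1, p.1 * p.2.2.1, p.2.2.2) := by
    funext p; exact hocA_apply p.1 p.2
  rw [this]; fun_prop

lemma hocA_norm_le {t : ℝ} (ht : |t| ≤ 1) : ‖hocA t‖ ≤ 1 := by
  refine ContinuousLinearMap.opNorm_le_bound _ zero_le_one fun v => ?_
  rw [hocA_apply, one_mul]
  have hv : ‖v‖ = max ‖v.1‖ (max ‖v.2.1‖ ‖v.2.2‖) := by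
    rw [Prod.norm_def, Prod.norm_def]
  rw [Prod.norm_def, Prod.norm_def, hv]
  simp only [Real.norm_eq_abs, abs_mul]
  have h1 : |t| * |v.1| ≤ |v.1| := by nlinarith [abs_nonneg v.1]
  have h2 : |t| * |v.2.1| ≤ |v.2.1| := by nlinarith [abs_nonneg v.2.1]
  simp only [max_le_iff]
  refine ⟨?_, ?_, ?_⟩
  · exact le_trans h1 (le_max_left _ _)
  · exact le_trans h2 (le_trans (le_max_left _ _) (le_max_right _ _))
  · exact le_trans (le_max_right _ _) (le_max_right _ _)

lemma clm_intervalIntegral_apply {a b : ℝ} {φ : ℝ → (ℝ × ℝ × ℝ) →L[ℝ] ℝ}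
    (hφ : IntervalIntegrable φ volume a b) (v : ℝ × ℝ × ℝ) :
    (∫ t in a..b, φ t) v = ∫ t in a..b, φ t v := by
  rw [intervalIntegral, intervalIntegral, ContinuousLinearMap.sub_apply,
    ContinuousLinearMap.integral_apply hφ.1, ContinuousLinearMap.integral_apply hφ.2]

lemma hoc_cont_aux {D : Set (ℝ × ℝ × ℝ)}
    (hstar : ∀ x ∈ D, ∀ t ∈ Set.Icc (0:ℝ) 1, hocA t x ∈ D)
    {g : ℝ × ℝ × ℝ → ℝ} (hg : ContinuousOn g D) {y : ℝ × ℝ × ℝ} (hy : y ∈ D) :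
    ContinuousOn (fun t : ℝ => g (hocA t y)) (Set.Icc 0 1) := by
  refine hg.comp ?_ fun t ht => hstar y hy t ht
  exact (hocA_cont2.comp (continuous_id.prodMk continuous_const)).continuousOn

/-- Differentiation under the integral sign for the homotopy operator. -/
lemma hoc_hasFDerivAt {D : Set (ℝ × ℝ × ℝ)} (hD : IsOpen D)
    (hstar : ∀ x ∈ D, ∀ t ∈ Set.Icc (0:ℝ) 1, hocA t x ∈ D)
    {g : ℝ × ℝ × ℝ → ℝ} (hg : ContDiffOn ℝ 1 g D)
    {w : ℝ → ℝ} (hw : Continuous w) {x : ℝ × ℝ × ℝ} (hx : x ∈ D) :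
    HasFDerivAt (fun y => ∫ t in (0:ℝ)..1, w t * g (hocA t y))
      (∫ t in (0:ℝ)..1, w t • ((fderiv ℝ g (hocA t x)).comp (hocA t))) x ∧
    IntervalIntegrable (fun t => w t • ((fderiv ℝ g (hocA t x)).comp (hocA t))) volume 0 1 := by
  have hIoc : Ι (0:ℝ) 1 = Set.Ioc 0 1 := Set.uIoc_of_le zero_le_one
  have hIcc : Set.uIcc (0:ℝ) 1 = Set.Icc 0 1 := Set.uIcc_of_le zero_le_one
  obtain ⟨ε, εpos, hball⟩ := Metric.isOpen_iff.1 hD x hx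
  set δ := ε / 2 with hδdef
  have δpos : 0 < δ := by positivity
  have hcb : closedBall x δ ⊆ D := fun y hy =>
    hball (lt_of_le_of_lt (mem_closedBall.1 hy) (by linarith))
  -- continuity of fderiv
  have hcf : ContinuousOn (fun z => fderiv ℝ g z) D :=
    hg.continuousOn_fderiv_of_isOpen hD le_rfl
  have hgc : ContinuousOn g D := hg.continuousOn
  have hgd : ∀ z ∈ D, HasFDerivAt g (fderiv ℝ g z) z := fun z hz =>
    ((hg.differentiableOn one_ne_zero).differentiableAt (hD.mem_nhds hz)).hasFDerivAt
  -- compact set and bound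
  set K := (fun p : ℝ × (ℝ × ℝ × ℝ) => hocA p.1 p.2) '' (Set.Icc 0 1 ×ˢ closedBall x δ) with hK
  have hKc : IsCompact K := ((isCompact_Icc).prod (isCompact_closedBall x δ)).image hocA_cont2
  have hKD : K ⊆ D := by
    rintro _ ⟨⟨t, y⟩, ⟨ht, hy⟩, rfl⟩
    exact hstar y (hcb hy) t ht
  obtain ⟨C, hC⟩ := hKc.exists_bound_of_continuousOn (hcf.mono hKD)
  obtain ⟨Cw, hCw⟩ := (isCompact_Icc (a := (0:ℝ)) (b := 1)).exists_bound_of_continuousOn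
    hw.continuousOn
  -- measurability of F x for x near x₀
  have hmeas : ∀ y ∈ ball x δ, AEStronglyMeasurable (fun t => w t * g (hocA t y))
      (volume.restrict (Ι (0:ℝ) 1)) := by
    intro y hy
    have hyD : y ∈ D := hcb (ball_subset_closedBall hy)
    have : ContinuousOn (fun t : ℝ => w t * g (hocA t y)) (Set.Icc 0 1) :=
      hw.continuousOn.mul (hoc_cont_aux hstar hgc hyD)
    rw [hIoc]
    exact (this.mono Set.Ioc_subset_Icc_self).aestronglyMeasurable measurableSet_Ioc
  have hF'cont : ContinuousOn (fun t => w t • ((fderiv ℝ g (hocA t x)).comp (hocA t)))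
      (Set.Icc 0 1) := by
    have h1 : ContinuousOn (fun t : ℝ => fderiv ℝ g (hocA t x)) (Set.Icc 0 1) := by
      refine hcf.comp ?_ fun t ht => hstar x hx t ht
      exact (hocA_cont2.comp (continuous_id.prodMk continuous_const)).continuousOn
    exact hw.continuousOn.smul (h1.clm_comp hocA_cont.continuousOn)
  have hF'int : IntervalIntegrable (fun t => w t • ((fderiv ℝ g (hocA t x)).comp (hocA t)))
      volume 0 1 := (hF'cont.mono (by rw [hIcc])).intervalIntegrable
  refine ⟨?_, hF'int⟩
  refine hasFDerivAt_integral_of_dominated_of_fderiv_le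
    (F := fun y t => w t * g (hocA t y))
    (F' := fun y t => w t • ((fderiv ℝ g (hocA t y)).comp (hocA t)))
    (bound := fun _ => Cw * C) (ball_mem_nhds x δpos) ?_ ?_ ?_ ?_ ?_ ?_
  · filter_upwards [ball_mem_nhds x δpos] with y hy using hmeas y hy
  · have hxD := hx
    have : ContinuousOn (fun t : ℝ => w t * g (hocA t x)) (Set.Icc 0 1) :=
      hw.continuousOn.mul (hoc_cont_aux hstar hgc hxD)
    exact (this.mono (by rw [hIcc])).intervalIntegrable
  · rw [hIoc]
    exact ((hF'cont.mono Set.Ioc_subset_Icc_self).aestronglyMeasurable measurableSet_Ioc)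
  · refine Filter.Eventually.of_forall fun t => fun ht y hy => ?_
    rw [hIoc] at ht
    have ht' : t ∈ Set.Icc (0:ℝ) 1 := Set.Ioc_subset_Icc_self ht
    have hyK : hocA t y ∈ K := ⟨(t, y), ⟨ht', ball_subset_closedBall hy⟩, rfl⟩
    have h1 : ‖fderiv ℝ g (hocA t y)‖ ≤ C := hC _ hyK
    have h2 : ‖hocA t‖ ≤ 1 := hocA_norm_le (abs_le.2 ⟨by linarith [ht'.1], ht'.2⟩)
    have h3 : ‖(fderiv ℝ g (hocA t y)).comp (hocA t)‖ ≤ C := by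
      calc ‖(fderiv ℝ g (hocA t y)).comp (hocA t)‖
          ≤ ‖fderiv ℝ g (hocA t y)‖ * ‖hocA t‖ := ContinuousLinearMap.opNorm_comp_le _ _
        _ ≤ C * 1 := mul_le_mul h1 h2 (norm_nonneg _) ((norm_nonneg _).trans h1)
        _ = C := mul_one C
    show ‖w t • (fderiv ℝ g (hocA t y)).comp (hocA t)‖ ≤ Cw * C
    rw [norm_smul (w t) ((fderiv ℝ g (hocA t y)).comp (hocA t))]
    have h4 : ‖w t‖ ≤ Cw := hCw t ht'
    exact mul_le_mul h4 h3 (norm_nonneg _) ((norm_nonneg _).trans h4)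
  · exact intervalIntegrable_const
  · refine Filter.Eventually.of_forall fun t => fun ht y hy => ?_
    rw [hIoc] at ht
    have ht' : t ∈ Set.Icc (0:ℝ) 1 := Set.Ioc_subset_Icc_self ht
    have hyD : y ∈ D := hcb (ball_subset_closedBall hy)
    have h1 : HasFDerivAt g (fderiv ℝ g (hocA t y)) (hocA t y) := hgd _ (hstar y hyD t ht')
    have h2 : HasFDerivAt (fun y => hocA t y) (hocA t) y := (hocA t).hasFDerivAt
    exact (h1.comp y h2).const_mul (w t)

lemma hoc_deriv_comp {D : Set (ℝ × ℝ × ℝ)} (hD : IsOpen D)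
    {g : ℝ × ℝ × ℝ → ℝ} (hg : ContDiffOn ℝ 1 g D) {x : ℝ × ℝ × ℝ} {t : ℝ}
    (hx' : hocA t x ∈ D) :
    HasDerivAt (fun s => g (hocA s x)) ((fderiv ℝ g (hocA t x)) (x.1, x.2.1, 0)) t := by
  have hγ : HasDerivAt (fun s => hocA s x) (x.1, x.2.1, 0) t := by
    have h1 : HasDerivAt (fun s : ℝ => s * x.1) x.1 t := by
      simpa using (hasDerivAt_id t).mul_const x.1
    have h2 : HasDerivAt (fun s : ℝ => s * x.2.1) x.2.1 t := by
      simpa using (hasDerivAt_id t).mul_const x.2.1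
    have h3 : HasDerivAt (fun _ : ℝ => x.2.2) 0 t := hasDerivAt_const t x.2.2
    have := h1.prodMk (h2.prodMk h3)
    convert this using 2 with s
    exact hocA_apply s x
  have hgd : HasFDerivAt g (fderiv ℝ g (hocA t x)) (hocA t x) :=
    ((hg.differentiableOn one_ne_zero).differentiableAt (hD.mem_nhds hx')).hasFDerivAt
  exact hgd.comp_hasDerivAt t hγ

lemma hoc_cont_fderiv_apply {D : Set (ℝ × ℝ × ℝ)} (hD : IsOpen D)
    (hstar : ∀ x ∈ D, ∀ t ∈ Set.Icc (0:ℝ) 1, hocA t x ∈ D)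
    {g : ℝ × ℝ × ℝ → ℝ} (hg : ContDiffOn ℝ 1 g D) {x : ℝ × ℝ × ℝ} (hx : x ∈ D)
    (v : ℝ × ℝ × ℝ) :
    ContinuousOn (fun t : ℝ => (fderiv ℝ g (hocA t x)) v) (Set.Icc 0 1) := by
  have hcf : ContinuousOn (fun z => fderiv ℝ g z) D :=
    hg.continuousOn_fderiv_of_isOpen hD le_rfl
  have h1 : ContinuousOn (fun t : ℝ => fderiv ℝ g (hocA t x)) (Set.Icc 0 1) := by
    refine hcf.comp ?_ fun t ht => hstar x hx t ht
    exact (hocA_cont2.comp (continuous_id.prodMk continuous_const)).continuousOn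
  exact h1.clm_apply continuousOn_const

lemma hoc_ftc {D : Set (ℝ × ℝ × ℝ)} (hD : IsOpen D)
    (hstar : ∀ x ∈ D, ∀ t ∈ Set.Icc (0:ℝ) 1, hocA t x ∈ D)
    {g : ℝ × ℝ × ℝ → ℝ} (hg : ContDiffOn ℝ 1 g D) {x : ℝ × ℝ × ℝ} (hx : x ∈ D)
    (p : ℕ) (hp : 1 ≤ p) :
    (∫ t in (0:ℝ)..1, ((p : ℝ) * t ^ (p - 1) * g (hocA t x)
      + t ^ p * (fderiv ℝ g (hocA t x)) (x.1, x.2.1, 0))) = g x := by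
  have hIcc : Set.uIcc (0:ℝ) 1 = Set.Icc 0 1 := Set.uIcc_of_le zero_le_one
  have key : ∀ t ∈ Set.uIcc (0:ℝ) 1,
      HasDerivAt (fun s => s ^ p * g (hocA s x))
        ((p : ℝ) * t ^ (p - 1) * g (hocA t x)
          + t ^ p * (fderiv ℝ g (hocA t x)) (x.1, x.2.1, 0)) t := by
    intro t ht
    rw [hIcc] at ht
    have h1 := (hasDerivAt_pow p t).mul (hoc_deriv_comp hD hg (hstar x hx t ht))
    exact h1.congr_deriv (by ring)
  have hint : IntervalIntegrable (fun t => (p : ℝ) * t ^ (p - 1) * g (hocA t x)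
      + t ^ p * (fderiv ℝ g (hocA t x)) (x.1, x.2.1, 0)) volume 0 1 := by
    have hc : ContinuousOn (fun t : ℝ => (p : ℝ) * t ^ (p - 1) * g (hocA t x)
        + t ^ p * (fderiv ℝ g (hocA t x)) (x.1, x.2.1, 0)) (Set.Icc 0 1) := by
      refine ContinuousOn.add ?_ ?_
      · exact (continuousOn_const.mul (continuousOn_pow _)).mul
          (hoc_cont_aux hstar hg.continuousOn hx)
      · exact (continuousOn_pow _).mul (hoc_cont_fderiv_apply hD hstar hg hx _)
    exact (hc.mono (by rw [hIcc])).intervalIntegrable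
  rw [intervalIntegral.integral_eq_sub_of_hasDerivAt key hint]
  have hx1 : hocA 1 x = x := by
    rw [hocA_apply]; simp
  have hx0 : (0:ℝ) ^ p = 0 := zero_pow (by omega)
  simp [hx1, hx0]

lemma clm3_decomp (M : (ℝ × ℝ × ℝ) →L[ℝ] ℝ) (v : ℝ × ℝ × ℝ) :
    M v = v.1 * M (1, 0, 0) + v.2.1 * M (0, 1, 0) + v.2.2 * M (0, 0, 1) := by
  have hv : v = v.1 • ((1:ℝ), (0:ℝ), (0:ℝ)) + v.2.1 • ((0:ℝ), (1:ℝ), (0:ℝ))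
      + v.2.2 • ((0:ℝ), (0:ℝ), (1:ℝ)) := by
    simp [Prod.ext_iff]
  conv_lhs => rw [hv]
  rw [map_add, map_add, M.map_smul, M.map_smul, M.map_smul]
  simp [smul_eq_mul]

lemma clm_intervalIntegrable_apply {a b : ℝ} {φ : ℝ → (ℝ × ℝ × ℝ) →L[ℝ] ℝ}
    (hφ : IntervalIntegrable φ volume a b) (v : ℝ × ℝ × ℝ) :
    IntervalIntegrable (fun t => φ t v) volume a b :=
  ⟨hφ.1.apply_continuousLinearMap v, hφ.2.apply_continuousLinearMap v⟩

/-- Partial derivative of `f : ℝ³ → ℝ` in the first coordinate. -/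
noncomputable def pd₁ (f : ℝ × ℝ × ℝ → ℝ) (x : ℝ × ℝ × ℝ) : ℝ :=
  fderiv ℝ f x (1, 0, 0)

/-- Partial derivative of `f : ℝ³ → ℝ` in the second coordinate. -/
noncomputable def pd₂ (f : ℝ × ℝ × ℝ → ℝ) (x : ℝ × ℝ × ℝ) : ℝ :=
  fderiv ℝ f x (0, 1, 0)

/-- Partial derivative of `f : ℝ³ → ℝ` in the third coordinate. -/
noncomputable def pd₃ (f : ℝ × ℝ × ℝ → ℝ) (x : ℝ × ℝ × ℝ) : ℝ :=
  fderiv ℝ f x (0, 0, 1)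

/-- **Homotopy operator on a solid cylinder.** Let `D = {x ∈ ℝ³ : x₁² + x₂² < r²}` and
let `α = a₁₂ dx₁∧dx₂ + a₁₃ dx₁∧dx₃ + a₂₃ dx₂∧dx₃` be a closed `C¹` 2-form on `D`.
Then the explicitly defined 1-form `β = β₁dx₁ + β₂dx₂ + β₃dx₃` satisfies `dβ = α` on `D`,
and if `|a₁₂|, |a₁₃|, |a₂₃| ≤ M` on `D` then `|βᵢ| ≤ 2rM` on `D`. -/
theorem homotopy_operator_cylinder
    (r : ℝ) (hr : 0 < r)
    (a₁₂ a₁₃ a₂₃ : ℝ × ℝ × ℝ → ℝ)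
    (h₁₂ : ContDiffOn ℝ 1 a₁₂ {x : ℝ × ℝ × ℝ | x.1 ^ 2 + x.2.1 ^ 2 < r ^ 2})
    (h₁₃ : ContDiffOn ℝ 1 a₁₃ {x : ℝ × ℝ × ℝ | x.1 ^ 2 + x.2.1 ^ 2 < r ^ 2})
    (h₂₃ : ContDiffOn ℝ 1 a₂₃ {x : ℝ × ℝ × ℝ | x.1 ^ 2 + x.2.1 ^ 2 < r ^ 2})
    (hclosed : ∀ x ∈ {x : ℝ × ℝ × ℝ | x.1 ^ 2 + x.2.1 ^ 2 < r ^ 2},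
      pd₁ a₂₃ x - pd₂ a₁₃ x + pd₃ a₁₂ x = 0)
    (β₁ β₂ β₃ : ℝ × ℝ × ℝ → ℝ)
    (hβ₁ : ∀ x : ℝ × ℝ × ℝ,
      β₁ x = -x.2.1 * ∫ t in (0 : ℝ)..1, t * a₁₂ (t * x.1, t * x.2.1, x.2.2))
    (hβ₂ : ∀ x : ℝ × ℝ × ℝ,
      β₂ x = x.1 * ∫ t in (0 : ℝ)..1, t * a₁₂ (t * x.1, t * x.2.1, x.2.2))
    (hβ₃ : ∀ x : ℝ × ℝ × ℝ,
      β₃ x = ∫ t in (0 : ℝ)..1,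
        (x.1 * a₁₃ (t * x.1, t * x.2.1, x.2.2) + x.2.1 * a₂₃ (t * x.1, t * x.2.1, x.2.2))) :
    (∀ x ∈ {x : ℝ × ℝ × ℝ | x.1 ^ 2 + x.2.1 ^ 2 < r ^ 2},
        pd₁ β₂ x - pd₂ β₁ x = a₁₂ x ∧
        pd₁ β₃ x - pd₃ β₁ x = a₁₃ x ∧
        pd₂ β₃ x - pd₃ β₂ x = a₂₃ x) ∧
    (∀ M : ℝ, 0 ≤ M →
      (∀ x ∈ {x : ℝ × ℝ × ℝ | x.1 ^ 2 + x.2.1 ^ 2 < r ^ 2},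
        |a₁₂ x| ≤ M ∧ |a₁₃ x| ≤ M ∧ |a₂₃ x| ≤ M) →
      (∀ x ∈ {x : ℝ × ℝ × ℝ | x.1 ^ 2 + x.2.1 ^ 2 < r ^ 2},
        |β₁ x| ≤ 2 * r * M ∧ |β₂ x| ≤ 2 * r * M ∧ |β₃ x| ≤ 2 * r * M)) := by
  set Dset : Set (ℝ × ℝ × ℝ) := {x : ℝ × ℝ × ℝ | x.1 ^ 2 + x.2.1 ^ 2 < r ^ 2} with hDset
  have hD : IsOpen Dset := by
    have h : Dset = (fun x : ℝ × ℝ × ℝ => x.1 ^ 2 + x.2.1 ^ 2) ⁻¹' Set.Iio (r ^ 2) := rfl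
    rw [h]
    exact (by fun_prop : Continuous fun x : ℝ × ℝ × ℝ =>
      x.1 ^ 2 + x.2.1 ^ 2).isOpen_preimage _ isOpen_Iio
  have hstar : ∀ x ∈ Dset, ∀ t ∈ Set.Icc (0:ℝ) 1, hocA t x ∈ Dset := by
    intro x hx t ht
    have hx' : x.1 ^ 2 + x.2.1 ^ 2 < r ^ 2 := hx
    have ht2 : t ^ 2 ≤ 1 := by nlinarith [ht.1, ht.2]
    rw [hocA_apply]
    show (t * x.1) ^ 2 + (t * x.2.1) ^ 2 < r ^ 2
    nlinarith [sq_nonneg x.1, sq_nonneg x.2.1]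
  have hIcc : Set.uIcc (0:ℝ) 1 = Set.Icc 0 1 := Set.uIcc_of_le zero_le_one
  have hIoc : Ι (0:ℝ) 1 = Set.Ioc 0 1 := Set.uIoc_of_le zero_le_one
  constructor
  · -- the derivative identities
    intro x hx
    obtain ⟨HI, hIint⟩ := hoc_hasFDerivAt hD hstar h₁₂ (w := fun t => t) continuous_id hx
    obtain ⟨HJ13, hJ13int⟩ :=
      hoc_hasFDerivAt hD hstar h₁₃ (w := fun _ => (1:ℝ)) continuous_const hx
    obtain ⟨HJ23, hJ23int⟩ :=
      hoc_hasFDerivAt hD hstar h₂₃ (w := fun _ => (1:ℝ)) continuous_const hx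
    set fstC : (ℝ × ℝ × ℝ) →L[ℝ] ℝ := ContinuousLinearMap.fst ℝ ℝ (ℝ × ℝ) with hfstC
    set sndC : (ℝ × ℝ × ℝ) →L[ℝ] ℝ :=
      (ContinuousLinearMap.fst ℝ ℝ ℝ).comp (ContinuousLinearMap.snd ℝ ℝ (ℝ × ℝ)) with hsndC
    have hfst : HasFDerivAt (fun y : ℝ × ℝ × ℝ => y.1) fstC x := hasFDerivAt_fst
    have hsnd : HasFDerivAt (fun y : ℝ × ℝ × ℝ => y.2.1) sndC x :=
      hasFDerivAt_fst.comp x hasFDerivAt_snd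
    have ef1 : fstC ((1:ℝ), (0:ℝ), (0:ℝ)) = 1 := rfl
    have ef2 : fstC ((0:ℝ), (1:ℝ), (0:ℝ)) = 0 := rfl
    have ef3 : fstC ((0:ℝ), (0:ℝ), (1:ℝ)) = 0 := rfl
    have es1 : sndC ((1:ℝ), (0:ℝ), (0:ℝ)) = 0 := rfl
    have es2 : sndC ((0:ℝ), (1:ℝ), (0:ℝ)) = 1 := rfl
    have es3 : sndC ((0:ℝ), (0:ℝ), (1:ℝ)) = 0 := rfl
    have hβ₁f : β₁ = fun y => -y.2.1 * ∫ t in (0:ℝ)..1, t * a₁₂ (hocA t y) := by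
      funext y; rw [hβ₁ y]; simp only [hocA_apply]
    have hβ₂f : β₂ = fun y => y.1 * ∫ t in (0:ℝ)..1, t * a₁₂ (hocA t y) := by
      funext y; rw [hβ₂ y]; simp only [hocA_apply]
    have hβ₁d : HasFDerivAt β₁
        ((-x.2.1) • (∫ t in (0:ℝ)..1, t • ((fderiv ℝ a₁₂ (hocA t x)).comp (hocA t)))
          + (∫ t in (0:ℝ)..1, t * a₁₂ (hocA t x)) • (-sndC)) x := by
      rw [hβ₁f]; exact hsnd.neg.mul HI
    have hβ₂d : HasFDerivAt β₂
        (x.1 • (∫ t in (0:ℝ)..1, t • ((fderiv ℝ a₁₂ (hocA t x)).comp (hocA t)))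
          + (∫ t in (0:ℝ)..1, t * a₁₂ (hocA t x)) • fstC) x := by
      rw [hβ₂f]; exact hfst.mul HI
    have hβ₃loc : ∀ y ∈ Dset, β₃ y =
        y.1 * (∫ t in (0:ℝ)..1, (1:ℝ) * a₁₃ (hocA t y))
          + y.2.1 * (∫ t in (0:ℝ)..1, (1:ℝ) * a₂₃ (hocA t y)) := by
      intro y hy
      rw [hβ₃ y]
      have i13 : IntervalIntegrable (fun t => y.1 * a₁₃ (hocA t y)) volume 0 1 := by
        have hc : ContinuousOn (fun t : ℝ => y.1 * a₁₃ (hocA t y)) (Set.Icc 0 1) :=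
          continuousOn_const.mul (hoc_cont_aux hstar h₁₃.continuousOn hy)
        exact (hc.mono (by rw [hIcc])).intervalIntegrable
      have i23 : IntervalIntegrable (fun t => y.2.1 * a₂₃ (hocA t y)) volume 0 1 := by
        have hc : ContinuousOn (fun t : ℝ => y.2.1 * a₂₃ (hocA t y)) (Set.Icc 0 1) :=
          continuousOn_const.mul (hoc_cont_aux hstar h₂₃.continuousOn hy)
        exact (hc.mono (by rw [hIcc])).intervalIntegrable
      simp only [← hocA_apply]
      rw [intervalIntegral.integral_add i13 i23, intervalIntegral.integral_const_mul,
        intervalIntegral.integral_const_mul]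
      simp only [one_mul]
    have hβ₃d : HasFDerivAt β₃
        (x.1 • (∫ t in (0:ℝ)..1, (1:ℝ) • ((fderiv ℝ a₁₃ (hocA t x)).comp (hocA t)))
          + (∫ t in (0:ℝ)..1, (1:ℝ) * a₁₃ (hocA t x)) • fstC
          + (x.2.1 • (∫ t in (0:ℝ)..1, (1:ℝ) • ((fderiv ℝ a₂₃ (hocA t x)).comp (hocA t)))
          + (∫ t in (0:ℝ)..1, (1:ℝ) * a₂₃ (hocA t x)) • sndC)) x := by
      have h := (hfst.mul HJ13).add (hsnd.mul HJ23)
      exact h.congr_of_eventuallyEq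
        (Filter.eventually_of_mem (hD.mem_nhds hx) hβ₃loc)
    have hcl : ∀ t ∈ Set.Icc (0:ℝ) 1,
        (fderiv ℝ a₂₃ (hocA t x)) (1, 0, 0) - (fderiv ℝ a₁₃ (hocA t x)) (0, 1, 0)
          + (fderiv ℝ a₁₂ (hocA t x)) (0, 0, 1) = 0 := by
      intro t ht
      simpa [pd₁, pd₂, pd₃] using hclosed _ (hstar x hx t ht)
    -- integrabilities of applied integrands
    have iI1 := clm_intervalIntegrable_apply hIint ((1:ℝ), (0:ℝ), (0:ℝ))
    have iI2 := clm_intervalIntegrable_apply hIint ((0:ℝ), (1:ℝ), (0:ℝ))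
    have iI3 := clm_intervalIntegrable_apply hIint ((0:ℝ), (0:ℝ), (1:ℝ))
    have iJ13_1 := clm_intervalIntegrable_apply hJ13int ((1:ℝ), (0:ℝ), (0:ℝ))
    have iJ13_2 := clm_intervalIntegrable_apply hJ13int ((0:ℝ), (1:ℝ), (0:ℝ))
    have iJ23_1 := clm_intervalIntegrable_apply hJ23int ((1:ℝ), (0:ℝ), (0:ℝ))
    have iJ23_2 := clm_intervalIntegrable_apply hJ23int ((0:ℝ), (1:ℝ), (0:ℝ))
    have ia12 : IntervalIntegrable (fun t => 2 * (t * a₁₂ (hocA t x))) volume 0 1 := by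
      have hc : ContinuousOn (fun t : ℝ => 2 * (t * a₁₂ (hocA t x))) (Set.Icc 0 1) :=
        continuousOn_const.mul (continuousOn_id.mul (hoc_cont_aux hstar h₁₂.continuousOn hx))
      exact (hc.mono (by rw [hIcc])).intervalIntegrable
    have ia13 : IntervalIntegrable (fun t => (1:ℝ) * a₁₃ (hocA t x)) volume 0 1 := by
      have hc : ContinuousOn (fun t : ℝ => (1:ℝ) * a₁₃ (hocA t x)) (Set.Icc 0 1) :=
        continuousOn_const.mul (hoc_cont_aux hstar h₁₃.continuousOn hx)
      exact (hc.mono (by rw [hIcc])).intervalIntegrable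
    have ia23 : IntervalIntegrable (fun t => (1:ℝ) * a₂₃ (hocA t x)) volume 0 1 := by
      have hc : ContinuousOn (fun t : ℝ => (1:ℝ) * a₂₃ (hocA t x)) (Set.Icc 0 1) :=
        continuousOn_const.mul (hoc_cont_aux hstar h₂₃.continuousOn hx)
      exact (hc.mono (by rw [hIcc])).intervalIntegrable
    refine ⟨?_, ?_, ?_⟩
    · -- identity 1
      have key : x.1 * (∫ t in (0:ℝ)..1,
            (t • ((fderiv ℝ a₁₂ (hocA t x)).comp (hocA t))) ((1:ℝ), (0:ℝ), (0:ℝ)))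
          + (x.2.1 * (∫ t in (0:ℝ)..1,
            (t • ((fderiv ℝ a₁₂ (hocA t x)).comp (hocA t))) ((0:ℝ), (1:ℝ), (0:ℝ)))
          + 2 * (∫ t in (0:ℝ)..1, t * a₁₂ (hocA t x))) = a₁₂ x := by
        rw [← intervalIntegral.integral_const_mul, ← intervalIntegral.integral_const_mul,
          ← intervalIntegral.integral_const_mul,
          ← intervalIntegral.integral_add (iI2.const_mul x.2.1) ia12,
          ← intervalIntegral.integral_add (iI1.const_mul x.1)
            ((iI2.const_mul x.2.1).add ia12),
          ← hoc_ftc hD hstar h₁₂ hx 2 (by norm_num)]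
        refine intervalIntegral.integral_congr fun t ht => ?_
        generalize fderiv ℝ a₁₂ (hocA t x) = Mt
        generalize a₁₂ (hocA t x) = gv
        simp only [ContinuousLinearMap.smul_apply, ContinuousLinearMap.comp_apply,
          hocA_apply, smul_eq_mul, mul_one, mul_zero]
        rw [clm3_decomp Mt (t, (0:ℝ), (0:ℝ)), clm3_decomp Mt ((0:ℝ), t, (0:ℝ)),
          clm3_decomp Mt (x.1, x.2.1, (0:ℝ))]
        push_cast
        ring
      rw [pd₁, pd₂, hβ₂d.fderiv, hβ₁d.fderiv]
      simp only [ContinuousLinearMap.add_apply, ContinuousLinearMap.smul_apply,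
        ContinuousLinearMap.neg_apply, smul_eq_mul]
      simp only [ef1, ef2, ef3, es1, es2, es3]
      rw [clm_intervalIntegral_apply hIint ((1:ℝ), (0:ℝ), (0:ℝ)),
        clm_intervalIntegral_apply hIint ((0:ℝ), (1:ℝ), (0:ℝ))]
      linarith [key]
    · -- identity 2
      have key : (∫ t in (0:ℝ)..1, (1:ℝ) * a₁₃ (hocA t x))
          + (x.1 * (∫ t in (0:ℝ)..1,
            ((1:ℝ) • ((fderiv ℝ a₁₃ (hocA t x)).comp (hocA t))) ((1:ℝ), (0:ℝ), (0:ℝ)))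
          + (x.2.1 * (∫ t in (0:ℝ)..1,
            ((1:ℝ) • ((fderiv ℝ a₂₃ (hocA t x)).comp (hocA t))) ((1:ℝ), (0:ℝ), (0:ℝ)))
          + x.2.1 * (∫ t in (0:ℝ)..1,
            (t • ((fderiv ℝ a₁₂ (hocA t x)).comp (hocA t))) ((0:ℝ), (0:ℝ), (1:ℝ))))) = a₁₃ x := by
        rw [← intervalIntegral.integral_const_mul, ← intervalIntegral.integral_const_mul,
          ← intervalIntegral.integral_const_mul,
          ← intervalIntegral.integral_add (iJ23_1.const_mul x.2.1) (iI3.const_mul x.2.1),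
          ← intervalIntegral.integral_add (iJ13_1.const_mul x.1)
            ((iJ23_1.const_mul x.2.1).add (iI3.const_mul x.2.1)),
          ← intervalIntegral.integral_add ia13
            ((iJ13_1.const_mul x.1).add
              ((iJ23_1.const_mul x.2.1).add (iI3.const_mul x.2.1))),
          ← hoc_ftc hD hstar h₁₃ hx 1 le_rfl]
        refine intervalIntegral.integral_congr fun t ht => ?_
        have hct := hcl t (by rwa [hIcc] at ht)
        generalize hM12 : fderiv ℝ a₁₂ (hocA t x) = M12 at hct
        generalize hM13 : fderiv ℝ a₁₃ (hocA t x) = M13 at hct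
        generalize hM23 : fderiv ℝ a₂₃ (hocA t x) = M23 at hct
        generalize a₁₃ (hocA t x) = gv
        simp only [ContinuousLinearMap.smul_apply, ContinuousLinearMap.comp_apply,
          hocA_apply, smul_eq_mul, mul_one, mul_zero, one_mul]
        rw [clm3_decomp M13 (t, (0:ℝ), (0:ℝ)), clm3_decomp M23 (t, (0:ℝ), (0:ℝ)),
          clm3_decomp M12 ((0:ℝ), (0:ℝ), (1:ℝ)), clm3_decomp M13 (x.1, x.2.1, (0:ℝ))]
        push_cast
        linear_combination (x.2.1 * t) * hct
      rw [pd₁, pd₃, hβ₃d.fderiv, hβ₁d.fderiv]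
      simp only [ContinuousLinearMap.add_apply, ContinuousLinearMap.smul_apply,
        ContinuousLinearMap.neg_apply, smul_eq_mul]
      simp only [ef1, ef2, ef3, es1, es2, es3]
      rw [clm_intervalIntegral_apply hJ13int ((1:ℝ), (0:ℝ), (0:ℝ)),
        clm_intervalIntegral_apply hJ23int ((1:ℝ), (0:ℝ), (0:ℝ)),
        clm_intervalIntegral_apply hIint ((0:ℝ), (0:ℝ), (1:ℝ))]
      linarith [key]
    · -- identity 3
      have key : (∫ t in (0:ℝ)..1, (1:ℝ) * a₂₃ (hocA t x))
          + (x.1 * (∫ t in (0:ℝ)..1,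
            ((1:ℝ) • ((fderiv ℝ a₁₃ (hocA t x)).comp (hocA t))) ((0:ℝ), (1:ℝ), (0:ℝ)))
          + (x.2.1 * (∫ t in (0:ℝ)..1,
            ((1:ℝ) • ((fderiv ℝ a₂₃ (hocA t x)).comp (hocA t))) ((0:ℝ), (1:ℝ), (0:ℝ)))
          + (-x.1) * (∫ t in (0:ℝ)..1,
            (t • ((fderiv ℝ a₁₂ (hocA t x)).comp (hocA t))) ((0:ℝ), (0:ℝ), (1:ℝ))))) = a₂₃ x := by
        rw [← intervalIntegral.integral_const_mul, ← intervalIntegral.integral_const_mul,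
          ← intervalIntegral.integral_const_mul,
          ← intervalIntegral.integral_add (iJ23_2.const_mul x.2.1) (iI3.const_mul (-x.1)),
          ← intervalIntegral.integral_add (iJ13_2.const_mul x.1)
            ((iJ23_2.const_mul x.2.1).add (iI3.const_mul (-x.1))),
          ← intervalIntegral.integral_add ia23
            ((iJ13_2.const_mul x.1).add
              ((iJ23_2.const_mul x.2.1).add (iI3.const_mul (-x.1)))),
          ← hoc_ftc hD hstar h₂₃ hx 1 le_rfl]
        refine intervalIntegral.integral_congr fun t ht => ?_
        have hct := hcl t (by rwa [hIcc] at ht)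
        generalize hM12 : fderiv ℝ a₁₂ (hocA t x) = M12 at hct
        generalize hM13 : fderiv ℝ a₁₃ (hocA t x) = M13 at hct
        generalize hM23 : fderiv ℝ a₂₃ (hocA t x) = M23 at hct
        generalize a₂₃ (hocA t x) = gv
        simp only [ContinuousLinearMap.smul_apply, ContinuousLinearMap.comp_apply,
          hocA_apply, smul_eq_mul, mul_one, mul_zero, one_mul]
        rw [clm3_decomp M13 ((0:ℝ), t, (0:ℝ)), clm3_decomp M23 ((0:ℝ), t, (0:ℝ)),
          clm3_decomp M12 ((0:ℝ), (0:ℝ), (1:ℝ)), clm3_decomp M23 (x.1, x.2.1, (0:ℝ))]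
        push_cast
        linear_combination (-x.1 * t) * hct
      rw [pd₂, pd₃, hβ₃d.fderiv, hβ₂d.fderiv]
      simp only [ContinuousLinearMap.add_apply, ContinuousLinearMap.smul_apply,
        ContinuousLinearMap.neg_apply, smul_eq_mul]
      simp only [ef1, ef2, ef3, es1, es2, es3]
      rw [clm_intervalIntegral_apply hJ13int ((0:ℝ), (1:ℝ), (0:ℝ)),
        clm_intervalIntegral_apply hJ23int ((0:ℝ), (1:ℝ), (0:ℝ)),
        clm_intervalIntegral_apply hIint ((0:ℝ), (0:ℝ), (1:ℝ))]
      linarith [key]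
  · -- the sup-norm bounds
    intro M hM hbound x hx
    have hx' : x.1 ^ 2 + x.2.1 ^ 2 < r ^ 2 := hx
    have hx1 : |x.1| ≤ r := by nlinarith [sq_abs x.1, abs_nonneg x.1, sq_nonneg x.2.1]
    have hx2 : |x.2.1| ≤ r := by nlinarith [sq_abs x.2.1, abs_nonneg x.2.1, sq_nonneg x.1]
    have hmem : ∀ t ∈ Ι (0:ℝ) 1, (t * x.1, t * x.2.1, x.2.2) ∈ Dset := by
      intro t ht
      rw [hIoc] at ht
      have := hstar x hx t (Set.Ioc_subset_Icc_self ht)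
      rwa [hocA_apply] at this
    have hrM : 0 ≤ r * M := mul_nonneg hr.le hM
    have hb1 : |∫ t in (0:ℝ)..1, t * a₁₂ (t * x.1, t * x.2.1, x.2.2)| ≤ M := by
      have h := intervalIntegral.norm_integral_le_of_norm_le_const (C := M)
        (f := fun t => t * a₁₂ (t * x.1, t * x.2.1, x.2.2)) (a := 0) (b := 1) ?_
      · simpa using h
      · intro t ht
        have hmem' := hmem t ht
        rw [hIoc] at ht
        have hb := (hbound _ hmem').1
        rw [Real.norm_eq_abs, abs_mul, abs_of_pos ht.1]
        nlinarith [ht.1, ht.2, abs_nonneg (a₁₂ (t * x.1, t * x.2.1, x.2.2))]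
    refine ⟨?_, ?_, ?_⟩
    · rw [hβ₁ x, abs_mul, abs_neg]
      have := mul_le_mul hx2 hb1 (abs_nonneg _) hr.le
      nlinarith [abs_nonneg x.2.1]
    · rw [hβ₂ x, abs_mul]
      have := mul_le_mul hx1 hb1 (abs_nonneg _) hr.le
      nlinarith [abs_nonneg x.1]
    · rw [hβ₃ x]
      have h := intervalIntegral.norm_integral_le_of_norm_le_const (C := 2 * r * M)
        (f := fun t => x.1 * a₁₃ (t * x.1, t * x.2.1, x.2.2)
          + x.2.1 * a₂₃ (t * x.1, t * x.2.1, x.2.2)) (a := 0) (b := 1) ?_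
      · simpa using h
      · intro t ht
        have hmem' := hmem t ht
        have hb13 := (hbound _ hmem').2.1
        have hb23 := (hbound _ hmem').2.2
        rw [Real.norm_eq_abs]
        calc |x.1 * a₁₃ (t * x.1, t * x.2.1, x.2.2) + x.2.1 * a₂₃ (t * x.1, t * x.2.1, x.2.2)|
            ≤ |x.1 * a₁₃ (t * x.1, t * x.2.1, x.2.2)|
              + |x.2.1 * a₂₃ (t * x.1, t * x.2.1, x.2.2)| := abs_add_le _ _
          _ = |x.1| * |a₁₃ (t * x.1, t * x.2.1, x.2.2)|
              + |x.2.1| * |a₂₃ (t * x.1, t * x.2.1, x.2.2)| := by rw [abs_mul, abs_mul]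
          _ ≤ r * M + r * M := add_le_add
              (mul_le_mul hx1 hb13 (abs_nonneg _) hr.le)
              (mul_le_mul hx2 hb23 (abs_nonneg _) hr.le)
          _ = 2 * r * M := by ring
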